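/- Let T be a clan. Every full map f : A → B in T-Mod (i.e. every map with the right lifting property with respect to the maps H(p) for display maps p) is a regular epimorphism: f is pointwise surjective and is the coequalizer of its kernel pair in T-Mod. -/

import Mathlib

open CategoryTheory CategoryTheory.Limits Opposite

universe u

namespace ClanThy

variable {T : Type u} [SmallCategory T]

/-- The clan axioms for a class `disp` of "display maps" in a small category `T`
(which is assumed to have a terminal object): pullbacks of display maps along arbitrary
maps exist and are display maps; isomorphisms and composites of display maps are display
maps; terminal projections are display maps. -/
structure IsClan [HasTerminal T] (disp : MorphismProperty T) : Prop where
  pullback_exists :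
    ∀ {Γ' Γ Δ : T} (p : Γ' ⟶ Γ) (s : Δ ⟶ Γ), disp p →
      ∃ (Δ' : T) (q : Δ' ⟶ Δ) (s' : Δ' ⟶ Γ') (h : q ≫ s = s' ≫ p),
        disp q ∧ Nonempty (IsLimit (PullbackCone.mk q s' h))
  iso_mem : ∀ {X Y : T} (e : X ⟶ Y), IsIso e → disp e
  comp_mem : ∀ {X Y Z : T} (p : X ⟶ Y) (q : Y ⟶ Z), disp p → disp q → disp (p ≫ q)
  terminal_mem : ∀ X : T, disp (terminal.from X)

/-- A model of the clan: a functor `T ⥤ Type` preserving the terminal object and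
pullbacks of display maps. -/
def IsModel (disp : MorphismProperty T) (A : T ⥤ Type u) : Prop :=
  Nonempty (PreservesLimitsOfShape (Discrete PEmpty.{1}) A) ∧
    ∀ ⦃X Y Z : T⦄ (g : X ⟶ Z) (p : Y ⟶ Z), disp p →
      Nonempty (PreservesLimit (cospan g p) A)

end ClanThy

open ClanThy

/-- every full map `f : A ⟶ B` of models of a clan (a map with the right
lifting property with respect to all `H(p)` for display maps `p`) is a regular
epimorphism: it is pointwise surjective and is the coequalizer of its kernel pair in the
category of models (the kernel pair being computed pointwise, i.e. in `[T, Type]`). -/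
theorem full_is_regular_epi
    {T : Type u} [SmallCategory T] [HasTerminal T]
    (disp : MorphismProperty T) (hclan : IsClan disp)
    {A B : T ⥤ Type u} (hA : IsModel disp A) (hB : IsModel disp B) (f : A ⟶ B)
    (hfull : ∀ {Δ Γ : T} (p : Δ ⟶ Γ), disp p → HasLiftingProperty (coyoneda.map p.op) f) :
    (∀ Γ : T, Function.Surjective (f.app Γ)) ∧
    (∀ (M : T ⥤ Type u), IsModel disp M → ∀ g : A ⟶ M,
      pullback.fst f f ≫ g = pullback.snd f f ≫ g →
        ∃! h : B ⟶ M, f ≫ h = g) := by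
  haveI := hA.1.some
  haveI := hB.1.some
  -- surjectivity
  have hsurj : ∀ Γ : T, Function.Surjective (f.app Γ) := by
    intro Γ b
    have tA : IsTerminal (A.obj (⊤_ T)) :=
      terminalIsTerminal.isTerminalObj A (⊤_ T)
    have tB : IsTerminal (B.obj (⊤_ T)) :=
      terminalIsTerminal.isTerminalObj B (⊤_ T)
    have hBsub : ∀ x y : B.obj (⊤_ T), x = y := by
      intro x y
      exact types_congr_hom
        (tB.hom_ext (TypeCat.ofHom (fun _ => x) : PUnit.{u+1} ⟶ B.obj (⊤_ T)) (TypeCat.ofHom fun _ => y)) PUnit.unit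
    set p : Γ ⟶ ⊤_ T := terminal.from Γ with hp
    haveI := hfull p (hclan.terminal_mem Γ)
    let a0 : A.obj (⊤_ T) := tA.from PUnit.{u+1} PUnit.unit
    let uu : coyoneda.obj (op (⊤_ T)) ⟶ A := coyonedaEquiv.symm a0
    let v : coyoneda.obj (op Γ) ⟶ B := coyonedaEquiv.symm b
    have sq : uu ≫ f = coyoneda.map p.op ≫ v := by
      apply coyonedaEquiv.injective
      exact hBsub _ _
    have csq : CommSq uu (coyoneda.map p.op) f v := ⟨sq⟩
    refine ⟨coyonedaEquiv csq.lift, ?_⟩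
    rw [← coyonedaEquiv_comp, csq.fac_right]
    exact Equiv.apply_symm_apply _ _
  refine ⟨hsurj, ?_⟩
  intro M _ g hg
  -- the kernel-pair condition, pointwise
  have key : ∀ (Γ : T) (a a' : A.obj Γ),
      f.app Γ a = f.app Γ a' → g.app Γ a = g.app Γ a' := by
    intro Γ a a' h
    let α : coyoneda.obj (op Γ) ⟶ A := coyonedaEquiv.symm a
    let α' : coyoneda.obj (op Γ) ⟶ A := coyonedaEquiv.symm a'
    have hc : α ≫ f = α' ≫ f := by
      apply coyonedaEquiv.injective
      rw [coyonedaEquiv_comp, coyonedaEquiv_comp]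
      simpa [α, α'] using h
    let k : coyoneda.obj (op Γ) ⟶ pullback f f := pullback.lift α α' hc
    have h1 : k ≫ pullback.fst f f = α := pullback.lift_fst _ _ _
    have h2 : k ≫ pullback.snd f f = α' := pullback.lift_snd _ _ _
    have : α ≫ g = α' ≫ g := by
      rw [← h1, ← h2, Category.assoc, Category.assoc, hg]
    have := congrArg coyonedaEquiv this
    rw [coyonedaEquiv_comp, coyonedaEquiv_comp] at this
    simpa [α, α'] using this
  -- construct the factorization
  let s : ∀ Γ : T, B.obj Γ → A.obj Γ := fun Γ => Function.surjInv (hsurj Γ)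
  have hs : ∀ (Γ : T) (b : B.obj Γ), f.app Γ (s Γ b) = b := fun Γ =>
    Function.surjInv_eq (hsurj Γ)
  let h : B ⟶ M :=
    { app := fun Γ => TypeCat.ofHom fun b => g.app Γ (s Γ b)
      naturality := by
        intro Γ Γ' t
        ext b
        simp only [TypeCat.Fun.toFun_apply, types_comp_apply, TypeCat.ofHom_apply]
        have nat : M.map t (g.app Γ (s Γ b)) = g.app Γ' (A.map t (s Γ b)) :=
          types_congr_hom (g.naturality t).symm (s Γ b)
        rw [nat]
        apply key
        have : f.app Γ' (A.map t (s Γ b)) = B.map t (f.app Γ (s Γ b)) :=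
          types_congr_hom (f.naturality t) (s Γ b)
        rw [this, hs, hs] }
  refine ⟨h, ?_, ?_⟩
  · ext Γ a
    show g.app Γ (s Γ (f.app Γ a)) = g.app Γ a
    apply key
    rw [hs]
  · intro h' hh'
    ext Γ b
    have : h'.app Γ (f.app Γ (s Γ b)) = g.app Γ (s Γ b) := types_congr_hom (congrArg
      (fun (η : A ⟶ M) => η.app Γ) hh') (s Γ b)
    rw [hs] at this
    exact this
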